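/- arXiv:2302.07294 — 5 statements merged into one kernel-verified Lean document; each statement's English description precedes it below -/
import Mathlib

section
/- The calibrator obtained by integrating over $\epsilon$: $F(u) = \int_0^1 \epsilon u^{\epsilon-1} d\epsilon = (1 - u + u \ln u)/(u(-\ln u)^2)$ for $u \in (0,1)$, satisfies $\int_0^1 F(u)\, du \le 1$ and is nonincreasing, hence is a valid p-to-e calibrator. -/
open MeasureTheory
open scoped ENNReal

private lemma eps_fun_eq {u : ℝ} (hu : 0 < u) :
    (fun ε : ℝ => ε * u ^ (ε - 1)) = fun ε => ε * Real.exp ((ε - 1) * Real.log u) := by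
  funext ε; rw [Real.rpow_def_of_pos hu, mul_comm (Real.log u)]

private lemma contEps {u : ℝ} (hu : 0 < u) : Continuous (fun ε : ℝ => ε * u ^ (ε - 1)) := by
  rw [eps_fun_eq hu]
  exact continuous_id.mul (Real.continuous_exp.comp (by continuity))

private lemma integrableEps {u : ℝ} (hu : 0 < u) :
    IntegrableOn (fun ε : ℝ => ε * u ^ (ε - 1)) (Set.Ioo 0 1) :=
  ((contEps hu).integrableOn_Icc).mono_set Set.Ioo_subset_Icc_self

private lemma epsInt {u : ℝ} (hu : u ∈ Set.Ioo (0:ℝ) 1) :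
    (∫ ε in Set.Ioo (0 : ℝ) 1, ε * u ^ (ε - 1))
      = (1 - u + u * Real.log u) / (u * (Real.log u) ^ 2) := by
  obtain ⟨hu0, hu1⟩ := hu
  have hlu : Real.log u < 0 := Real.log_neg hu0 hu1
  have ha : Real.log u ≠ 0 := ne_of_lt hlu
  set a := Real.log u with ha_def
  have hderiv : ∀ ε ∈ Set.uIcc (0:ℝ) 1,
      HasDerivAt (fun ε : ℝ => Real.exp ((ε - 1) * a) * (ε / a - 1 / a ^ 2))
        (ε * u ^ (ε - 1)) ε := by
    intro ε _
    have h1 : HasDerivAt (fun ε : ℝ => (ε - 1) * a) a ε := by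
      simpa using ((hasDerivAt_id ε).sub_const 1).mul_const a
    have h2 : HasDerivAt (fun ε : ℝ => Real.exp ((ε - 1) * a))
        (Real.exp ((ε - 1) * a) * a) ε := h1.exp
    have h3 : HasDerivAt (fun ε : ℝ => ε / a - 1 / a ^ 2) a⁻¹ ε := by
      have := ((hasDerivAt_id ε).div_const a).sub_const (1 / a ^ 2)
      simpa [one_div] using this
    have h4 := h2.mul h3
    refine h4.congr_deriv ?_
    rw [Real.rpow_def_of_pos hu0, ← ha_def, mul_comm a]
    field_simp
    ring
  have hFTC := intervalIntegral.integral_eq_sub_of_hasDerivAt hderiv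
    ((contEps hu0).intervalIntegrable 0 1)
  have hset : (∫ ε in Set.Ioo (0 : ℝ) 1, ε * u ^ (ε - 1))
      = ∫ ε in (0:ℝ)..1, ε * u ^ (ε - 1) := by
    rw [intervalIntegral.integral_of_le zero_le_one, ← integral_Ioc_eq_integral_Ioo]
  rw [hset, hFTC]
  have hexp : Real.exp ((0 - 1) * a) = u⁻¹ := by
    rw [ha_def]
    rw [show ((0:ℝ) - 1) * Real.log u = -Real.log u by ring, Real.exp_neg, Real.exp_log hu0]
  rw [hexp]
  simp only [sub_self, zero_mul, Real.exp_zero, one_mul]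
  field_simp
  ring

private lemma nonneg_num {u : ℝ} (hu0 : 0 < u) (hu1 : u < 1) :
    0 ≤ 1 - u + u * Real.log u := by
  have h := Real.log_le_sub_one_of_pos (inv_pos.mpr hu0)
  rw [Real.log_inv] at h
  have h2 : u * -Real.log u ≤ u * (u⁻¹ - 1) :=
    mul_le_mul_of_nonneg_left h hu0.le
  rw [mul_sub, mul_inv_cancel₀ (ne_of_gt hu0)] at h2
  linarith

/-- The mixture calibrator `F(u) = ∫_0^1 ε u^{ε-1} dε = (1 - u + u log u)/(u (log u)^2)`
on `(0,1)` satisfies the integral identity, has `∫_0^1 F(u) du ≤ 1`, and is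
nonincreasing; hence it is a valid p-to-e calibrator. -/
theorem mixture_calibrator_valid :
    (∀ u ∈ Set.Ioo (0 : ℝ) 1,
      (∫ ε in Set.Ioo (0 : ℝ) 1, ε * u ^ (ε - 1))
        = (1 - u + u * Real.log u) / (u * (Real.log u) ^ 2)) ∧
    (∫⁻ u in Set.Ioo (0 : ℝ) 1,
        ENNReal.ofReal ((1 - u + u * Real.log u) / (u * (Real.log u) ^ 2)) ≤ 1) ∧
    AntitoneOn (fun u : ℝ => (1 - u + u * Real.log u) / (u * (Real.log u) ^ 2))
      (Set.Ioo (0 : ℝ) 1) := by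
  refine ⟨fun u hu => epsInt hu, ?_, ?_⟩
  · -- Tonelli
    have hmeas : AEMeasurable (Function.uncurry fun (u ε : ℝ) => ENNReal.ofReal (ε * u ^ (ε - 1)))
        ((volume.restrict (Set.Ioo (0:ℝ) 1)).prod (volume.restrict (Set.Ioo (0:ℝ) 1))) := by
      apply Measurable.aemeasurable
      apply ENNReal.measurable_ofReal.comp
      exact measurable_snd.mul (measurable_fst.pow (measurable_snd.sub measurable_const))
    have step1 : (∫⁻ u in Set.Ioo (0:ℝ) 1,
        ENNReal.ofReal ((1 - u + u * Real.log u) / (u * (Real.log u) ^ 2)))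
        = ∫⁻ u in Set.Ioo (0:ℝ) 1, ∫⁻ ε in Set.Ioo (0:ℝ) 1,
            ENNReal.ofReal (ε * u ^ (ε - 1)) := by
      refine lintegral_congr_ae ((ae_restrict_iff' measurableSet_Ioo).2 (.of_forall ?_))
      intro u hu
      dsimp only
      rw [← epsInt hu]
      rw [← ofReal_integral_eq_lintegral_ofReal (integrableEps hu.1)]
      refine (ae_restrict_iff' measurableSet_Ioo).2 (.of_forall fun ε hε => ?_)
      exact mul_nonneg hε.1.le (Real.rpow_nonneg hu.1.le _)
    have step2 := lintegral_lintegral_swap hmeas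
    have step3 : (∫⁻ ε in Set.Ioo (0:ℝ) 1, ∫⁻ u in Set.Ioo (0:ℝ) 1,
        ENNReal.ofReal (ε * u ^ (ε - 1))) = 1 := by
      have inner : ∀ ε ∈ Set.Ioo (0:ℝ) 1,
          (∫⁻ u in Set.Ioo (0:ℝ) 1, ENNReal.ofReal (ε * u ^ (ε - 1))) = 1 := by
        intro ε hε
        have hint : IntegrableOn (fun u : ℝ => ε * u ^ (ε - 1)) (Set.Ioo 0 1) := by
          have := (intervalIntegral.intervalIntegrable_rpow' (r := ε - 1)
            (by linarith [hε.1]) (a := 0) (b := 1)).const_mul ε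
          rw [intervalIntegrable_iff, Set.uIoc_of_le zero_le_one] at this
          exact this.mono_set Set.Ioo_subset_Ioc_self
        rw [← ofReal_integral_eq_lintegral_ofReal hint
          ((ae_restrict_iff' measurableSet_Ioo).2 (.of_forall fun u hu =>
            mul_nonneg hε.1.le (Real.rpow_nonneg hu.1.le _)))]
        have : (∫ u in Set.Ioo (0:ℝ) 1, ε * u ^ (ε - 1)) = 1 := by
          rw [← integral_Ioc_eq_integral_Ioo,
            ← intervalIntegral.integral_of_le zero_le_one,
            intervalIntegral.integral_const_mul,
            integral_rpow (Or.inl (by linarith [hε.1]))]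
          rw [sub_add_cancel, Real.one_rpow, Real.zero_rpow (ne_of_gt hε.1)]
          field_simp
          rw [sub_zero, mul_one]
          exact div_self (ne_of_gt hε.1)
        rw [this, ENNReal.ofReal_one]
      rw [setLIntegral_congr_fun measurableSet_Ioo inner]
      simp [Real.volume_Ioo]
    rw [step1, step2, step3]
  · -- antitone
    intro u hu v hv huv
    dsimp only
    rw [← epsInt hu, ← epsInt hv]
    refine setIntegral_mono_on (integrableEps hv.1) (integrableEps hu.1)
      measurableSet_Ioo fun ε hε => ?_
    exact mul_le_mul_of_nonneg_left
      (Real.rpow_le_rpow_of_nonpos hu.1 huv (by linarith [hε.2])) hε.1.le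
end

section
/- The eBH procedure controls the FDR under average validity: if nonnegative random variables $e_1, \dots, e_N$ satisfy $\sum_{j \in \mathcal{H}_0} \mathbb{E}[e_j] \le N$ where $\mathcal{H}_0 \subseteq [N]$ is the set of true nulls, and the eBH filter at level $\alpha$ rejects the set $\mathcal{R} = \{j : e_j \ge e_{(i_{\max})}\}$ with $i_{\max} = \max\{i : e_{(i)} \ge N/(\alpha i)\}$ (and $\mathcal{R} = \emptyset$ if no such $i$ exists), where $e_{(1)} \ge \dots \ge e_{(N)}$ are the order statistics, then $\mathbb{E}[|\mathcal{R} \cap \mathcal{H}_0| / \max\{1, |\mathcal{R}|\}] \le \alpha$. -/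
open MeasureTheory
open scoped ENNReal

/-- The eBH rejection set at level `α` for e-values `e : Fin N → ℝ`, given a
permutation `σ` sorting the e-values in decreasing order (so the `i`-th order
statistic is `e (σ i)` for the 1-indexed rank `i.val + 1`): let
`i_max = max {i : e_(i) ≥ N / (α i)}` and reject `{j : e j ≥ e_(i_max)}`,
or reject nothing if no such `i` exists. -/
noncomputable def eBHReject (N : ℕ) (α : ℝ) (e : Fin N → ℝ) (σ : Equiv.Perm (Fin N)) :
    Set (Fin N) :=
  if h : (Finset.univ.filter
      (fun i : Fin N => (N : ℝ) / (α * ((i : ℕ) + 1)) ≤ e (σ i))).Nonempty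
  then {j : Fin N | e (σ ((Finset.univ.filter
      (fun i : Fin N => (N : ℝ) / (α * ((i : ℕ) + 1)) ≤ e (σ i))).max' h)) ≤ e j}
  else ∅

lemma eBH_fdp_le {N : ℕ} (hN : 0 < N) {α : ℝ} (hα : 0 < α) (e : Fin N → ℝ)
    (hpos : ∀ j, 0 ≤ e j) (σ : Equiv.Perm (Fin N))
    (hsort : ∀ i j : Fin N, i ≤ j → e (σ j) ≤ e (σ i))
    (H0 : Finset (Fin N)) :
    ((eBHReject N α e σ ∩ ↑H0).ncard : ℝ) / max 1 ((eBHReject N α e σ).ncard : ℝ)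
      ≤ (α / N) * ∑ j ∈ H0, e j := by
  have hNpos : (0:ℝ) < N := by exact_mod_cast hN
  have hrhs : 0 ≤ (α / N) * ∑ j ∈ H0, e j :=
    mul_nonneg (div_nonneg hα.le hNpos.le) (Finset.sum_nonneg fun j _ => hpos j)
  rw [eBHReject]
  split_ifs with h
  · set i := (Finset.univ.filter
      (fun i : Fin N => (N : ℝ) / (α * ((i : ℕ) + 1)) ≤ e (σ i))).max' h with hi_def
    have hi : (N : ℝ) / (α * ((i : ℕ) + 1)) ≤ e (σ i) := by
      have hmem := Finset.max'_mem _ h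
      rw [← hi_def] at hmem
      simpa using (Finset.mem_filter.mp hmem).2
    set F := Finset.univ.filter (fun j : Fin N => e (σ i) ≤ e j) with hF
    have hset : {j : Fin N | e (σ i) ≤ e j} = (↑F : Set (Fin N)) := by
      ext j; simp [hF]
    rw [hset, ← Finset.coe_inter, Set.ncard_coe_finset, Set.ncard_coe_finset]
    have hcard_i : (i : ℕ) + 1 ≤ F.card := by
      have hsub : (Finset.Iic i).image σ ⊆ F := by
        intro j hj
        obtain ⟨k, hk, rfl⟩ := Finset.mem_image.mp hj
        simp only [hF, Finset.mem_filter, Finset.mem_univ, true_and]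
        exact hsort k i (Finset.mem_Iic.mp hk)
      calc (i : ℕ) + 1 = (Finset.Iic i).card := (Fin.card_Iic i).symm
        _ = ((Finset.Iic i).image σ).card :=
            (Finset.card_image_of_injective _ σ.injective).symm
        _ ≤ F.card := Finset.card_le_card hsub
    have hFpos : 0 < F.card := lt_of_lt_of_le (Nat.succ_pos _) hcard_i
    have hFposR : (0:ℝ) < F.card := by exact_mod_cast hFpos
    have hmax : max (1:ℝ) (F.card : ℝ) = F.card :=
      max_eq_right (by exact_mod_cast hFpos)
    rw [hmax]
    have key : ∀ j ∈ F ∩ H0, (1:ℝ) / F.card ≤ (α / N) * e j := by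
      intro j hj
      have hje : e (σ i) ≤ e j :=
        (Finset.mem_filter.mp (Finset.mem_inter.mp hj).1).2
      have h1 : (N:ℝ) / (α * F.card) ≤ e j := by
        refine le_trans (le_trans ?_ hi) hje
        have hd : (0:ℝ) < α * ((i:ℕ) + 1) := by positivity
        apply div_le_div_of_nonneg_left hNpos.le hd
        have : ((i:ℕ) + 1 : ℝ) ≤ F.card := by exact_mod_cast hcard_i
        nlinarith
      have heq : (1:ℝ) / F.card = (α / N) * ((N:ℝ) / (α * F.card)) := by
        field_simp
      rw [heq]
      exact mul_le_mul_of_nonneg_left h1 (div_nonneg hα.le hNpos.le)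
    calc ((F ∩ H0).card : ℝ) / F.card
        = ∑ _j ∈ F ∩ H0, (1:ℝ) / F.card := by
          rw [Finset.sum_const, nsmul_eq_mul, mul_one_div]
      _ ≤ ∑ j ∈ F ∩ H0, (α / N) * e j := Finset.sum_le_sum key
      _ ≤ ∑ j ∈ H0, (α / N) * e j := by
          apply Finset.sum_le_sum_of_subset_of_nonneg Finset.inter_subset_right
          intro j _ _
          exact mul_nonneg (div_nonneg hα.le hNpos.le) (hpos j)
      _ = (α / N) * ∑ j ∈ H0, e j := by rw [Finset.mul_sum]
  · simpa using hrhs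

/-- The eBH procedure controls the FDR under average validity: if the nonnegative
e-values satisfy `∑_{j ∈ H0} E[e_j] ≤ N`, then the FDR of the eBH filter at level
`α` is at most `α`. -/
theorem eBH_fdr_control
    {Ω : Type*} [MeasurableSpace Ω] (μ : Measure Ω) [IsProbabilityMeasure μ]
    (N : ℕ) (hN : 0 < N) (α : ℝ) (hα : α ∈ Set.Ioo (0 : ℝ) 1)
    (e : Fin N → Ω → ℝ) (hmeas : ∀ j, Measurable (e j)) (hpos : ∀ j ω, 0 ≤ e j ω)
    (hInt : ∀ j, Integrable (e j) μ)
    (H0 : Finset (Fin N))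
    (havg : ∑ j ∈ H0, ∫ ω, e j ω ∂μ ≤ (N : ℝ))
    (σ : Ω → Equiv.Perm (Fin N))
    (hsort : ∀ ω, ∀ i j : Fin N, i ≤ j → e (σ ω j) ω ≤ e (σ ω i) ω) :
    ∫⁻ ω, ENNReal.ofReal
        (((eBHReject N α (fun j => e j ω) (σ ω) ∩ ↑H0).ncard : ℝ) /
          (max 1 ((eBHReject N α (fun j => e j ω) (σ ω)).ncard : ℝ))) ∂μ
      ≤ ENNReal.ofReal α := by
  have hNpos : (0:ℝ) < N := by exact_mod_cast hN
  have hint : Integrable (fun ω => (α / N) * ∑ j ∈ H0, e j ω) μ :=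
    (integrable_finset_sum _ fun j _ => hInt j).const_mul _
  calc ∫⁻ ω, ENNReal.ofReal
        (((eBHReject N α (fun j => e j ω) (σ ω) ∩ ↑H0).ncard : ℝ) /
          (max 1 ((eBHReject N α (fun j => e j ω) (σ ω)).ncard : ℝ))) ∂μ
      ≤ ∫⁻ ω, ENNReal.ofReal ((α / N) * ∑ j ∈ H0, e j ω) ∂μ := by
        refine lintegral_mono fun ω => ENNReal.ofReal_le_ofReal ?_
        exact eBH_fdp_le hN hα.1 (fun j => e j ω) (fun j => hpos j ω) (σ ω)
          (hsort ω) H0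
    _ = ENNReal.ofReal (∫ ω, (α / N) * ∑ j ∈ H0, e j ω ∂μ) := by
        rw [ofReal_integral_eq_lintegral_ofReal hint]
        filter_upwards with ω
        exact mul_nonneg (div_nonneg hα.1.le hNpos.le)
          (Finset.sum_nonneg fun j _ => hpos j ω)
    _ ≤ ENNReal.ofReal α := by
        apply ENNReal.ofReal_le_ofReal
        rw [integral_const_mul, integral_finset_sum _ fun j _ => hInt j]
        calc (α / N) * ∑ j ∈ H0, ∫ ω, e j ω ∂μ
            ≤ (α / N) * N :=
              mul_le_mul_of_nonneg_left havg (div_nonneg hα.1.le hNpos.le)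
          _ = α := by field_simp
end

section
/- If each rejection by eBH at level $\alpha$ requires $e_j \ge N/(\alpha |\mathcal{R}|)$ for all $j \in \mathcal{R}$ where $\mathcal{R}$ is the rejection set, then the false discovery proportion satisfies the deterministic bound $|\mathcal{R} \cap \mathcal{H}_0|/\max\{1,|\mathcal{R}|\} \le (\alpha/N)\sum_{j \in \mathcal{H}_0} e_j$. -/
/-- Deterministic FDP bound for eBH-type rejections: if every rejected index `j ∈ R`
satisfies `e j ≥ N / (α |R|)`, then
`|R ∩ H0| / max{1, |R|} ≤ (α / N) ∑_{j ∈ H0} e j`. -/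
theorem eBH_fdp_deterministic_bound
    (N : ℕ) (hN : 0 < N) (α : ℝ) (hα : 0 < α)
    (e : Fin N → ℝ) (hpos : ∀ j, 0 ≤ e j)
    (H0 R : Finset (Fin N))
    (hrej : ∀ j ∈ R, (N : ℝ) / (α * R.card) ≤ e j) :
    ((R ∩ H0).card : ℝ) / max 1 (R.card : ℝ) ≤ (α / N) * ∑ j ∈ H0, e j := by
  have hsum0 : 0 ≤ ∑ j ∈ H0, e j := Finset.sum_nonneg fun j _ => hpos j
  rcases Nat.eq_zero_or_pos R.card with h0 | hRpos
  · rw [Finset.card_eq_zero] at h0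
    simp [h0]
    positivity
  · have hRc : (1 : ℝ) ≤ (R.card : ℝ) := by exact_mod_cast hRpos
    rw [max_eq_right hRc]
    have hR0 : (0 : ℝ) < (R.card : ℝ) := by linarith
    have hN0 : (0 : ℝ) < (N : ℝ) := by exact_mod_cast hN
    -- sum over H0 ≥ sum over R∩H0 ≥ |R∩H0| * N/(α |R|)
    have h1 : ((R ∩ H0).card : ℝ) * ((N : ℝ) / (α * R.card)) ≤ ∑ j ∈ H0, e j := by
      calc ((R ∩ H0).card : ℝ) * ((N : ℝ) / (α * R.card))
          = ∑ _j ∈ R ∩ H0, (N : ℝ) / (α * R.card) := by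
            rw [Finset.sum_const, nsmul_eq_mul]
        _ ≤ ∑ j ∈ R ∩ H0, e j := Finset.sum_le_sum fun j hj =>
            hrej j (Finset.mem_inter.mp hj).1
        _ ≤ ∑ j ∈ H0, e j := Finset.sum_le_sum_of_subset_of_nonneg
            (Finset.inter_subset_right) (fun j _ _ => hpos j)
    rw [div_le_iff₀ hR0]
    have key : (α / N) * (((R ∩ H0).card : ℝ) * ((N : ℝ) / (α * R.card))) =
        ((R ∩ H0).card : ℝ) / (R.card : ℝ) := by
      field_simp
    have h2 := mul_le_mul_of_nonneg_left h1 (le_of_lt (div_pos hα hN0))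
    rw [key] at h2
    calc ((R ∩ H0).card : ℝ) = ((R ∩ H0).card : ℝ) / (R.card : ℝ) * (R.card : ℝ) := by
          field_simp
      _ ≤ (α / N * ∑ j ∈ H0, e j) * (R.card : ℝ) :=
          mul_le_mul_of_nonneg_right h2 hR0.le
end

section
/- The soft-rank e-value is valid: let $R_0, R_1, \dots, R_n$ be exchangeable nonnegative random variables with $\sum_{i=0}^n R_i > 0$ almost surely. Then $e_0 = (n+1) R_0 / \sum_{i=0}^n R_i$ satisfies $\mathbb{E}[e_0] \le 1$ (with equality when the sum is a.s. positive). -/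
open MeasureTheory

/-- Validity of the soft-rank e-value: if `R 0, R 1, ..., R n` are exchangeable
nonnegative random variables whose sum is a.s. positive, then
`e_0 = (n+1) R 0 / ∑_i R i` satisfies `E[e_0] ≤ 1`, with equality. -/
theorem soft_rank_evalue_valid
    {Ω : Type*} [MeasurableSpace Ω] (μ : Measure Ω) [IsProbabilityMeasure μ]
    (n : ℕ) (R : Ω → Fin (n + 1) → ℝ) (hR : Measurable R)
    (hexch : ∀ π : Equiv.Perm (Fin (n + 1)), μ.map (fun ω => R ω ∘ π) = μ.map R)
    (hpos : ∀ ω i, 0 ≤ R ω i)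
    (hsum : ∀ᵐ ω ∂μ, 0 < ∑ i, R ω i) :
    (∫ ω, ((n : ℝ) + 1) * R ω 0 / (∑ i, R ω i) ∂μ ≤ 1) ∧
      (∫ ω, ((n : ℝ) + 1) * R ω 0 / (∑ i, R ω i) ∂μ = 1) := by
  set g : Fin (n + 1) → (Fin (n + 1) → ℝ) → ℝ := fun i x => x i / ∑ j, x j with hgdef
  have hgmeas : ∀ i, Measurable (g i) := fun i =>
    (measurable_pi_apply i).div (Finset.measurable_sum _ fun j _ => measurable_pi_apply j)
  have hint : ∀ i, Integrable (fun ω => g i (R ω)) μ := by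
    intro i
    refine (integrable_const (1 : ℝ)).mono' ((hgmeas i).comp hR).aestronglyMeasurable
      (ae_of_all _ fun ω => ?_)
    have h0 : 0 ≤ g i (R ω) :=
      div_nonneg (hpos ω i) (Finset.sum_nonneg fun j _ => hpos ω j)
    have h1 : g i (R ω) ≤ 1 := by
      refine div_le_one_of_le₀ (Finset.single_le_sum (fun j _ => hpos ω j)
        (Finset.mem_univ i)) (Finset.sum_nonneg fun j _ => hpos ω j)
    rw [Real.norm_eq_abs, abs_of_nonneg h0]
    exact h1
  have key : ∀ i, ∫ ω, g i (R ω) ∂μ = ∫ ω, g 0 (R ω) ∂μ := by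
    intro i
    have hπmeas : Measurable (fun ω => R ω ∘ Equiv.swap (0 : Fin (n + 1)) i) :=
      measurable_pi_lambda _ fun j => (measurable_pi_apply _).comp hR
    have h1 : ∫ ω, g 0 (R ω ∘ Equiv.swap (0 : Fin (n + 1)) i) ∂μ
        = ∫ ω, g 0 (R ω) ∂μ := by
      rw [← integral_map hπmeas.aemeasurable (hgmeas 0).aestronglyMeasurable,
          ← integral_map hR.aemeasurable (hgmeas 0).aestronglyMeasurable,
          hexch (Equiv.swap 0 i)]
    have h2 : ∀ ω, g 0 (R ω ∘ Equiv.swap (0 : Fin (n + 1)) i) = g i (R ω) := by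
      intro ω
      simp only [hgdef, Function.comp, Equiv.swap_apply_left]
      rw [Equiv.sum_comp (Equiv.swap (0 : Fin (n + 1)) i) (R ω)]
    calc ∫ ω, g i (R ω) ∂μ = ∫ ω, g 0 (R ω ∘ Equiv.swap (0 : Fin (n + 1)) i) ∂μ := by
          simp_rw [h2]
      _ = ∫ ω, g 0 (R ω) ∂μ := h1
  have hsum_int : ∑ i, ∫ ω, g i (R ω) ∂μ = 1 := by
    rw [← integral_finset_sum _ fun i _ => hint i]
    have : ∀ᵐ ω ∂μ, (∑ i, g i (R ω)) = 1 := by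
      filter_upwards [hsum] with ω hω
      simp only [hgdef]
      rw [← Finset.sum_div, div_self (ne_of_gt hω)]
    rw [integral_congr_ae this, integral_const, probReal_univ, smul_eq_mul,
      mul_one]
  have hconst : ∑ i : Fin (n + 1), ∫ ω, g i (R ω) ∂μ
      = ((n : ℝ) + 1) * ∫ ω, g 0 (R ω) ∂μ := by
    rw [Finset.sum_congr rfl fun i _ => key i, Finset.sum_const, Finset.card_univ,
      Fintype.card_fin, nsmul_eq_mul]
    push_cast
    ring
  have hmain : ∫ ω, ((n : ℝ) + 1) * R ω 0 / (∑ i, R ω i) ∂μ = 1 := by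
    have : (fun ω => ((n : ℝ) + 1) * R ω 0 / (∑ i, R ω i))
        = fun ω => ((n : ℝ) + 1) * g 0 (R ω) := by
      funext ω
      simp only [hgdef]
      ring
    rw [this, integral_const_mul, ← hconst, hsum_int]
  exact ⟨le_of_eq hmain, hmain⟩
end

section
/- The VS calibrator dominates the calibrator family: for all $u \in (0,1]$, $\sup_{\epsilon \in (0,1)} \epsilon u^{\epsilon-1} = -e^{-1}/(u \ln u)$ if $u \le e^{-1}$, and the supremum equals $1$ (attained in the limit $\epsilon \to 1$) if $u > e^{-1}$; moreover the VS calibrator is not a valid calibrator since $\int_0^1 \mathrm{VS}(u)\,du > 1$. -/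
open scoped ENNReal

open MeasureTheory

private lemma vs_aux_upper {u : ℝ} (hu0 : 0 < u) (hL : Real.log u ≤ -1) {ε : ℝ}
    (hε : ε ∈ Set.Ioo (0:ℝ) 1) :
    ε * u ^ (ε - 1) ≤ -Real.exp (-1) / (u * Real.log u) := by
  set L := Real.log u with hLdef
  have hLneg : L < 0 := lt_of_le_of_lt hL (by norm_num)
  have hden : 0 < u * -L := mul_pos hu0 (neg_pos.2 hLneg)
  have hrw : -Real.exp (-1) / (u * L) = Real.exp (-1) / (u * -L) := by
    rw [mul_neg, div_neg, neg_div]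
  rw [hrw, le_div_iff₀ hden]
  have hupow : u ^ (ε - 1) = Real.exp (L * (ε - 1)) := Real.rpow_def_of_pos hu0 _
  have hu_eq : Real.exp L = u := Real.exp_log hu0
  set t := ε * -L with htdef
  have ht0 : 0 < t := mul_pos hε.1 (neg_pos.2 hLneg)
  have hLHS : ε * u ^ (ε - 1) * (u * -L) = t * Real.exp (-t) := by
    have h2 : Real.exp (L * (ε - 1)) * u = Real.exp (-t) := by
      rw [← hu_eq, ← Real.exp_add]
      congr 1
      simp only [htdef]; ring
    rw [hupow, htdef]
    calc ε * Real.exp (L * (ε - 1)) * (u * -L)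
        = (ε * -L) * (Real.exp (L * (ε - 1)) * u) := by ring
      _ = ε * -L * Real.exp (-(ε * -L)) := by rw [h2, htdef]
  rw [hLHS]
  have h1 : t ≤ Real.exp (t - 1) := by linarith [Real.add_one_le_exp (t - 1)]
  have h2 : Real.exp (t - 1) * Real.exp (-t) = Real.exp (-1) := by
    rw [← Real.exp_add]; ring_nf
  have h3 : 0 < Real.exp (-t) := Real.exp_pos _
  nlinarith

private lemma vs_aux_ub_ge_one {u : ℝ} (hu0 : 0 < u) (hu1 : u ≤ 1) {b : ℝ}
    (hb : b ∈ upperBounds {v : ℝ | ∃ ε ∈ Set.Ioo (0 : ℝ) 1, v = ε * u ^ (ε - 1)}) :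
    1 ≤ b := by
  refine le_of_forall_lt fun c hc => ?_
  set ε : ℝ := max (1/2) ((c+1)/2) with hεdef
  have hε0 : 0 < ε := lt_of_lt_of_le (by norm_num) (le_max_left _ _)
  have hε1 : ε < 1 := by
    apply max_lt (by norm_num); linarith
  have hcε : c < ε := lt_of_lt_of_le (by linarith [le_max_right (1/2 : ℝ) ((c+1)/2)] : c < (c+1)/2) (le_max_right _ _) |>.trans_le (le_refl _)
  have hpow : 1 ≤ u ^ (ε - 1) :=
    Real.one_le_rpow_of_pos_of_le_one_of_nonpos hu0 hu1 (by linarith)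
  have hmem : ε * u ^ (ε - 1) ∈ {v : ℝ | ∃ ε ∈ Set.Ioo (0 : ℝ) 1, v = ε * u ^ (ε - 1)} :=
    ⟨ε, ⟨hε0, hε1⟩, rfl⟩
  have := hb hmem
  nlinarith

/-- The VS calibrator dominates the family `F_ε(u) = ε u^{ε-1}`: for `u ∈ (0,1]`,
the supremum over `ε ∈ (0,1)` equals `-e⁻¹/(u log u)` when `u ≤ e⁻¹` and `1`
when `u > e⁻¹`; moreover the VS calibrator is not a valid calibrator, since its
integral over `(0,1)` exceeds 1. -/
theorem vs_calibrator :
    (∀ u ∈ Set.Ioc (0 : ℝ) 1, u ≤ Real.exp (-1) →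
      sSup {v : ℝ | ∃ ε ∈ Set.Ioo (0 : ℝ) 1, v = ε * u ^ (ε - 1)}
        = -Real.exp (-1) / (u * Real.log u)) ∧
    (∀ u ∈ Set.Ioc (0 : ℝ) 1, Real.exp (-1) < u →
      sSup {v : ℝ | ∃ ε ∈ Set.Ioo (0 : ℝ) 1, v = ε * u ^ (ε - 1)} = 1) ∧
    (1 < ∫⁻ u in Set.Ioo (0 : ℝ) 1,
      ENNReal.ofReal
        (if u ≤ Real.exp (-1) then -Real.exp (-1) / (u * Real.log u) else 1)) := by
  refine ⟨?_, ?_, ?_⟩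
  · -- part 1
    intro u hu hue
    have hu0 : 0 < u := hu.1
    have hL : Real.log u ≤ -1 := by
      have h := Real.log_le_log hu0 hue
      rwa [Real.log_exp] at h
    have hne : Set.Nonempty {v : ℝ | ∃ ε ∈ Set.Ioo (0 : ℝ) 1, v = ε * u ^ (ε - 1)} :=
      ⟨(1/2 : ℝ) * u ^ ((1:ℝ)/2 - 1), (1/2 : ℝ), by norm_num, rfl⟩
    apply IsLUB.csSup_eq _ hne
    constructor
    · rintro v ⟨ε, hε, rfl⟩
      exact vs_aux_upper hu0 hL hε
    · intro b hb
      rcases eq_or_lt_of_le hue with heq | hlt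
      · -- u = exp (-1)
        have hLeq : Real.log u = -1 := by rw [heq, Real.log_exp]
        have : -Real.exp (-1) / (u * Real.log u) = 1 := by
          rw [hLeq, heq]
          field_simp
        rw [this]
        exact vs_aux_ub_ge_one hu0 hu.2 hb
      · -- u < exp (-1), sup attained
        have hLlt : Real.log u < -1 := by
          have h := Real.log_lt_log hu0 hlt
          rwa [Real.log_exp] at h
        set L := Real.log u with hLdef
        have hLne : L ≠ 0 := by intro h; rw [h] at hLlt; norm_num at hLlt
        set ε : ℝ := (-L)⁻¹ with hεdef
        have hnL1 : 1 < -L := by linarith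
        have hε0 : 0 < ε := inv_pos.2 (by linarith)
        have hε1 : ε < 1 := by
          rw [hεdef, inv_lt_one_iff₀]; right; exact hnL1
        have hval : ε * u ^ (ε - 1) = -Real.exp (-1) / (u * L) := by
          have hupow : u ^ (ε - 1) = Real.exp (L * (ε - 1)) := Real.rpow_def_of_pos hu0 _
          have hLε : L * ε = -1 := by
            rw [hεdef]
            field_simp
          have : L * (ε - 1) = -1 - L := by rw [mul_sub, hLε]; ring
          rw [hupow, this, Real.exp_sub, Real.exp_neg, Real.exp_log hu0]
          rw [hεdef]
          field_simp
        exact hval ▸ hb ⟨ε, ⟨hε0, hε1⟩, rfl⟩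
  · -- part 2
    intro u hu hue
    have hu0 : 0 < u := hu.1
    have hL : -1 < Real.log u := by
      have h := Real.log_lt_log (Real.exp_pos _) hue
      rwa [Real.log_exp] at h
    have hne : Set.Nonempty {v : ℝ | ∃ ε ∈ Set.Ioo (0 : ℝ) 1, v = ε * u ^ (ε - 1)} :=
      ⟨(1/2 : ℝ) * u ^ ((1:ℝ)/2 - 1), (1/2 : ℝ), by norm_num, rfl⟩
    apply IsLUB.csSup_eq _ hne
    constructor
    · rintro v ⟨ε, hε, rfl⟩
      have hupow : u ^ (ε - 1) = Real.exp (Real.log u * (ε - 1)) := Real.rpow_def_of_pos hu0 _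
      have h1 : Real.log u * (ε - 1) ≤ 1 - ε := by nlinarith [hε.2, hL]
      have h2 : u ^ (ε - 1) ≤ Real.exp (1 - ε) := by
        rw [hupow]; exact Real.exp_le_exp.2 h1
      have h3 : ε ≤ Real.exp (ε - 1) := by linarith [Real.add_one_le_exp (ε - 1)]
      have h4 : Real.exp (ε - 1) * Real.exp (1 - ε) = 1 := by
        rw [← Real.exp_add]; norm_num
      have h5 : 0 < Real.exp (1 - ε) := Real.exp_pos _
      have h6 : 0 < ε := hε.1
      nlinarith [Real.exp_pos (ε - 1)]
    · intro b hb
      exact vs_aux_ub_ge_one hu0 hu.2 hb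
  · -- part 3: integral diverges / exceeds 1
    set a : ℝ := Real.exp (-Real.exp 3) with hadef
    set b : ℝ := Real.exp (-1) with hbdef
    set f : ℝ → ℝ := fun x => -Real.exp (-1) / (x * Real.log x) with hfdef
    have hab : a < b := Real.exp_lt_exp.2 (by nlinarith [Real.add_one_le_exp (3:ℝ)])
    have hb1 : b < 1 := by
      rw [hbdef, ← Real.exp_zero]; exact Real.exp_lt_exp.2 (by norm_num)
    have ha0 : 0 < a := Real.exp_pos _
    -- properties on [a, b]
    have hx_facts : ∀ x ∈ Set.Icc a b, 0 < x ∧ Real.log x < 0 := by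
      intro x hx
      have hx0 : 0 < x := lt_of_lt_of_le ha0 hx.1
      exact ⟨hx0, Real.log_neg hx0 (lt_of_le_of_lt hx.2 hb1)⟩
    have hderiv : ∀ x ∈ Set.Icc a b,
        HasDerivAt (fun y => -Real.exp (-1) * Real.log (-Real.log y)) (f x) x := by
      intro x hx
      obtain ⟨hx0, hxL⟩ := hx_facts x hx
      have h1 : HasDerivAt Real.log x⁻¹ x := Real.hasDerivAt_log (ne_of_gt hx0)
      have h2 : HasDerivAt (fun y => -Real.log y) (-x⁻¹) x := h1.neg
      have h3 : HasDerivAt (fun y => Real.log (-Real.log y)) ((-Real.log x)⁻¹ * -x⁻¹) x := by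
        have hne : -Real.log x ≠ 0 := ne_of_gt (neg_pos.2 hxL)
        exact (Real.hasDerivAt_log hne).comp x h2
      have h4 := h3.const_mul (-Real.exp (-1))
      refine h4.congr_deriv ?_
      rw [hfdef]
      have hLne : Real.log x ≠ 0 := ne_of_lt hxL
      field_simp
    have hcont : ContinuousOn f (Set.Icc a b) := by
      apply ContinuousOn.div continuousOn_const
      · exact continuousOn_id.mul (Real.continuousOn_log.mono (fun x hx => ne_of_gt (hx_facts x hx).1))
      · intro x hx
        obtain ⟨hx0, hxL⟩ := hx_facts x hx
        exact ne_of_lt (mul_neg_of_pos_of_neg hx0 hxL)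
    have hInt : IntervalIntegrable f volume a b := by
      apply ContinuousOn.intervalIntegrable
      rwa [Set.uIcc_of_le hab.le]
    have hval : ∫ x in a..b, f x = 3 * Real.exp (-1) := by
      rw [intervalIntegral.integral_eq_sub_of_hasDerivAt
        (fun x hx => hderiv x (by rwa [Set.uIcc_of_le hab.le] at hx)) hInt]
      rw [hbdef, hadef, Real.log_exp, Real.log_exp, neg_neg, neg_neg, Real.log_exp,
        Real.log_one]
      ring
    have hnn : ∀ x ∈ Set.Ioc a b, 0 ≤ f x := by
      intro x hx
      obtain ⟨hx0, hxL⟩ := hx_facts x ⟨hx.1.le, hx.2⟩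
      show 0 ≤ -Real.exp (-1) / (x * Real.log x)
      rw [show -Real.exp (-1) / (x * Real.log x) = Real.exp (-1) / (x * -Real.log x) by
        rw [mul_neg, div_neg, neg_div]]
      exact div_nonneg (Real.exp_pos _).le (mul_nonneg hx0.le (neg_nonneg.2 hxL.le))
    have hsub : Set.Ioc a b ⊆ Set.Ioo (0:ℝ) 1 := fun x hx =>
      ⟨lt_trans ha0 hx.1, lt_of_le_of_lt hx.2 hb1⟩
    have key : (1:ℝ) < 3 * Real.exp (-1) := by
      have he : Real.exp 1 < 2.7182818286 := Real.exp_one_lt_d9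
      have h1 : Real.exp (-1) = (Real.exp 1)⁻¹ := Real.exp_neg 1
      have hpos : 0 < Real.exp 1 := Real.exp_pos 1
      have hinv : Real.exp 1 * (Real.exp 1)⁻¹ = 1 := mul_inv_cancel₀ (ne_of_gt hpos)
      have hip : 0 < (Real.exp 1)⁻¹ := inv_pos.2 hpos
      rw [h1]
      nlinarith
    calc (1:ℝ≥0∞) < ENNReal.ofReal (3 * Real.exp (-1)) := by
          rw [← ENNReal.ofReal_one]
          exact ENNReal.ofReal_lt_ofReal_iff (by positivity) |>.2 key
      _ = ENNReal.ofReal (∫ x in Set.Ioc a b, f x) := by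
          rw [← intervalIntegral.integral_of_le hab.le, hval]
      _ = ∫⁻ x in Set.Ioc a b, ENNReal.ofReal (f x) :=
          ofReal_integral_eq_lintegral_ofReal hInt.1
            ((ae_restrict_iff' measurableSet_Ioc).2 (Filter.Eventually.of_forall hnn))
      _ = ∫⁻ x in Set.Ioc a b, ENNReal.ofReal
            (if x ≤ Real.exp (-1) then -Real.exp (-1) / (x * Real.log x) else 1) := by
          apply setLIntegral_congr_fun measurableSet_Ioc
          exact fun x hx => by rw [if_pos hx.2]
      _ ≤ ∫⁻ u in Set.Ioo (0 : ℝ) 1, ENNReal.ofReal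
            (if u ≤ Real.exp (-1) then -Real.exp (-1) / (u * Real.log u) else 1) :=
          lintegral_mono_set hsub
end
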